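/- If t is a real number such that ‖b(F)·t‖ → 0 as min F → ∞ over finite subsets F of ℕ (where b(F) = ∑_{j∈F} b_j for an increasing sequence b of positive integers, and ‖x‖ denotes distance to the nearest integer), then ∑_{n≥1} ‖b_n·t‖ < ∞. -/

import Mathlib

/-- distance from a real number to the nearest integer -/
noncomputable def nint (x : ℝ) : ℝ := |x - round x|

/-- If `‖b(F)·t‖ → 0` as `min F → ∞` over finite nonempty subsets `F` of `ℕ`,
then `∑ₙ ‖bₙ t‖ < ∞`. -/
theorem stmt0 (b : ℕ → ℕ) (hb : StrictMono b) (hbpos : ∀ n, 0 < b n) (t : ℝ)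
    (hIP : ∀ ε > 0, ∃ K : ℕ, ∀ F : Finset ℕ, ∀ hF : F.Nonempty,
      K ≤ F.min' hF → nint ((∑ j ∈ F, b j : ℕ) * t) < ε) :
    Summable (fun n => nint ((b n : ℝ) * t)) := by
  obtain ⟨K, hK⟩ := hIP (1/4) (by norm_num)
  set θ : ℕ → ℝ := fun n => (b n : ℝ) * t - round ((b n : ℝ) * t) with hθ
  have hθ2 : ∀ n, |θ n| ≤ 1/2 := fun n => by
    simpa [hθ] using abs_sub_round ((b n : ℝ) * t)
  -- small rounding lemma
  have small : ∀ x : ℝ, |x| < 3/4 → |x - round x| < 1/4 → |x| < 1/4 := by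
    intro x hx hr
    have h0 : round x = 0 := by
      have h1 : |(round x : ℝ)| < 1 := by
        have := abs_sub_abs_le_abs_sub (round x : ℝ) x
        rw [abs_sub_comm] at this
        linarith
      have h2 : |round x| < 1 := by exact_mod_cast (by push_cast; exact h1 : |((round x : ℤ) : ℝ)| < 1)
      rw [abs_lt] at h2
      omega
    simpa [h0] using hr
  -- the IP hypothesis controls the signed error sums
  have key : ∀ F : Finset ℕ, ∀ hF : F.Nonempty, K ≤ F.min' hF →
      |∑ j ∈ F, θ j| < 1/4 := by
    intro F
    induction F using Finset.strongInduction with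
    | _ F ih =>
      intro hF hmin
      have h1 : nint ((∑ j ∈ F, b j : ℕ) * t) < 1/4 := hK F hF hmin
      set x : ℝ := ∑ j ∈ F, θ j with hx
      set N : ℤ := ∑ j ∈ F, round ((b j : ℝ) * t) with hN
      have hsum : ((∑ j ∈ F, b j : ℕ) : ℝ) * t = x + N := by
        push_cast
        rw [Finset.sum_mul, hx, hN]
        push_cast
        rw [← Finset.sum_add_distrib]
        exact Finset.sum_congr rfl (fun j _ => by simp [hθ])
      have h1' : |x - round x| < 1/4 := by
        rw [hsum] at h1
        simpa [nint, round_add_intCast] using h1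
      have hbig : |x| < 3/4 := by
        rcases Finset.eq_singleton_or_nontrivial (F.min'_mem hF) with h | h
        · rw [hx, h, Finset.sum_singleton]
          linarith [hθ2 (F.min' hF)]
        · set m := F.max' hF with hm
          have hmF : m ∈ F := F.max'_mem hF
          have hF' : (F.erase m).Nonempty := h.erase_nonempty
          have hminF' : K ≤ (F.erase m).min' hF' := by
            have h3 : (F.erase m).min' hF' ∈ F :=
              Finset.mem_of_mem_erase ((F.erase m).min'_mem hF')
            exact le_trans hmin (F.min'_le _ h3)
          have hih : |∑ j ∈ F.erase m, θ j| < 1/4 :=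
            ih (F.erase m) (Finset.erase_ssubset hmF) hF' hminF'
          have hsplit : x = (∑ j ∈ F.erase m, θ j) + θ m := by
            rw [hx, Finset.sum_erase_add F θ hmF]
          rw [hsplit]
          calc |(∑ j ∈ F.erase m, θ j) + θ m| ≤ |∑ j ∈ F.erase m, θ j| + |θ m| :=
                abs_add_le _ _
            _ < 3/4 := by linarith [hθ2 m]
      exact small x hbig h1'
  -- conclude summability
  have hnint : ∀ n, nint ((b n : ℝ) * t) = |θ n| := fun n => rfl
  rw [show (fun n => nint ((b n : ℝ) * t)) = fun n => |θ n| from rfl]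
  rw [← summable_nat_add_iff K]
  apply summable_of_sum_le (c := (1/2 : ℝ)) (fun n => abs_nonneg _)
  intro u
  -- split u into positive and negative parts
  have habs : ∀ (P : Finset ℕ), (∀ n ∈ P, K ≤ n) → |∑ j ∈ P, θ j| ≤ 1/4 := by
    intro P hP
    rcases P.eq_empty_or_nonempty with rfl | hPne
    · simp
    · exact le_of_lt (key P hPne (hP _ (P.min'_mem hPne)))
  have himg : ∀ (v : Finset ℕ), ∑ n ∈ v, θ (n + K) = ∑ j ∈ v.image (· + K), θ j := by
    intro v
    rw [Finset.sum_image (fun a _ c _ h => by omega)]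
  have hmem : ∀ (v : Finset ℕ) (j : ℕ), j ∈ v.image (· + K) → K ≤ j := by
    intro v j hj
    obtain ⟨a, _, rfl⟩ := Finset.mem_image.mp hj
    omega
  set P := u.filter (fun n => 0 ≤ θ (n + K)) with hP
  set Q := u.filter (fun n => ¬ 0 ≤ θ (n + K)) with hQ
  have hsplit : ∑ n ∈ u, |θ (n + K)| = ∑ n ∈ P, θ (n + K) + ∑ n ∈ Q, (- θ (n + K)) := by
    rw [← Finset.sum_filter_add_sum_filter_not u (fun n => 0 ≤ θ (n + K)) (fun n => |θ (n + K)|)]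
    congr 1
    · exact Finset.sum_congr rfl (fun n hn => abs_of_nonneg (Finset.mem_filter.mp hn).2)
    · exact Finset.sum_congr rfl (fun n hn =>
        abs_of_neg (lt_of_not_ge (Finset.mem_filter.mp hn).2))
  have hPle : ∑ n ∈ P, θ (n + K) ≤ 1/4 := by
    rw [himg P]
    exact le_trans (le_abs_self _) (habs _ (hmem P))
  have hQle : ∑ n ∈ Q, (- θ (n + K)) ≤ 1/4 := by
    rw [Finset.sum_neg_distrib, himg Q]
    exact le_trans (neg_le_abs _) (habs _ (hmem Q))
  rw [hsplit]; linarith
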